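/- Let d ≥ 1, let s = (s_1,…,s_d) be a scaling of positive integers, and let 0 < α < 1 < η < 2. Assume D ⊆ ℝ^d has the property that for each i ∈ {1,…,d} with s_i = 1, whenever x, y ∈ D then y + d(x,y)·e_i ∈ D. Then there exists a constant C depending only on d, s, α, η such that for every germ U over D and every R > 0: sup_{x∈D} [U_x]_{C^α(D ∩ B_R(x))} ≤ C (‖U‖_{G^η(D)} + [U]_{G^{η,α}(D)}) R^{η−α}, where [f]_{C^α(A)} := sup_{y,z∈A, y≠z} |f(y)−f(z)| / d(y,z)^α. -/

import Mathlib

open scoped BigOperators ENNReal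
open MeasureTheory

noncomputable section

namespace GermSchauder

variable {d : ℕ}

/-- Anisotropic distance determined by the scaling `s`. -/
def adist (s : Fin d → ℕ) (x y : Fin d → ℝ) : ℝ :=
  ∑ i, |x i - y i| ^ ((s i : ℝ)⁻¹)

/-- Anisotropic open ball of radius `R` around `x`. -/
def aball (s : Fin d → ℕ) (x : Fin d → ℝ) (R : ℝ) : Set (Fin d → ℝ) :=
  {y | adist s x y < R}

/-- `P` is a complex polynomial function on `ℝ^d` of anisotropic degree at most `k`. -/
def IsAnisoPoly (s : Fin d → ℕ) (k : ℝ) (P : (Fin d → ℝ) → ℂ) : Prop :=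
  ∃ p : MvPolynomial (Fin d) ℂ,
    (∀ γ ∈ p.support, ((∑ i, s i * γ i : ℕ) : ℝ) ≤ k) ∧
    ∀ z, P z = MvPolynomial.eval (fun j => (z j : ℂ)) p

/-- A germ over `D`: a family of functions continuous on `D`. -/
def IsGerm (D : Set (Fin d → ℝ)) (U : (Fin d → ℝ) → (Fin d → ℝ) → ℂ) : Prop :=
  ∀ x ∈ D, ContinuousOn (U x) D

/-- The `G^η(D)` norm of a germ, valued in `[0,∞]`. -/
def germNorm (s : Fin d → ℕ) (D : Set (Fin d → ℝ)) (η : ℝ)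
    (U : (Fin d → ℝ) → (Fin d → ℝ) → ℂ) : ℝ≥0∞ :=
  ⨅ M : {M : ℝ // 0 < M ∧ ∀ x ∈ D, ∀ y ∈ D,
      Norm.norm (U x y) ≤ M * adist s x y ^ η}, ENNReal.ofReal M.1

/-- The `G^{η,α}(D)` seminorm of a germ, valued in `[0,∞]`. -/
def germHA (s : Fin d → ℕ) (D : Set (Fin d → ℝ)) (η α : ℝ)
    (U : (Fin d → ℝ) → (Fin d → ℝ) → ℂ) : ℝ≥0∞ :=
  ⨅ M : {M : ℝ // 0 < M ∧ ∀ x ∈ D, ∀ y ∈ D, ∃ P : (Fin d → ℝ) → ℂ,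
      IsAnisoPoly s (⌊η⌋ : ℝ) P ∧ ∀ z ∈ D,
      Norm.norm (U x z - U y z - P z) ≤
        M * adist s y z ^ α * (adist s x y + adist s y z) ^ (η - α)}, ENNReal.ofReal M.1

/-- The anisotropic rescaling/recentering map `S^R_w`. -/
def smap (s : Fin d → ℕ) (R : ℝ) (w : Fin d → ℝ) (y : Fin d → ℝ) : Fin d → ℝ :=
  fun i => w i + R ^ (s i) * y i

/-- The action of `S^R_w` on germs. -/
def sgerm (s : Fin d → ℕ) (R : ℝ) (w : Fin d → ℝ)
    (U : (Fin d → ℝ) → (Fin d → ℝ) → ℂ) : (Fin d → ℝ) → (Fin d → ℝ) → ℂ :=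
  fun x y => U (smap s R w x) (smap s R w y)

/-- First order partial derivative in direction `j`. -/
def pderiv1 (j : Fin d) (φ : (Fin d → ℝ) → ℝ) : (Fin d → ℝ) → ℝ :=
  fun x => fderiv ℝ φ x (Pi.single j 1)

/-- Multi-index partial derivative `∂^β`. -/
def pderivM (β : Fin d → ℕ) (φ : (Fin d → ℝ) → ℝ) : (Fin d → ℝ) → ℝ :=
  (List.finRange d).foldr (fun j ψ => (pderiv1 j)^[β j] ψ) φ

/-- The class `ℬ_k` of test functions: `C^k`, supported in the unit anisotropic
ball, with all partial derivatives of anisotropic degree at most `k` bounded by one. -/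
structure TestB (s : Fin d → ℕ) (k : ℕ) where
  toFun : (Fin d → ℝ) → ℝ
  contDiff : ContDiff ℝ k toFun
  support_subset : Function.support toFun ⊆ aball s 0 1
  deriv_le : ∀ β : Fin d → ℕ, (∑ i, s i * β i) ≤ k → ∀ y, |pderivM β toFun y| ≤ 1

/-- The rescaled and recentered test function `φ_x^λ`. -/
def tscale (s : Fin d → ℕ) (φ : (Fin d → ℝ) → ℝ) (x : Fin d → ℝ) (lam : ℝ) :
    (Fin d → ℝ) → ℝ :=
  fun y => (lam ^ (∑ i, s i))⁻¹ * φ (fun i => (lam ^ s i)⁻¹ * (y i - x i))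

/-- Multi-indices of anisotropic degree exactly `m`. -/
def midxEq (s : Fin d → ℕ) (m : ℕ) : Finset (Fin d → ℕ) :=
  (Fintype.piFinset fun _ => Finset.range (m + 1)).filter fun γ => ∑ i, s i * γ i = m

/-- Multi-indices of anisotropic degree at most `η`. -/
def midxLe (s : Fin d → ℕ) (η : ℝ) : Finset (Fin d → ℕ) :=
  (Fintype.piFinset fun _ => Finset.range (⌊η⌋₊ + 1)).filter
    fun γ => ((∑ i, s i * γ i : ℕ) : ℝ) ≤ η

/-- The formal adjoint `𝓛*ψ` of `𝓛 = Σ_{|γ|=m} a_γ ∂^γ` applied to a real test function. -/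
def Lstar (s : Fin d → ℕ) (m : ℕ) (a : (Fin d → ℕ) → ℂ) (ψ : (Fin d → ℝ) → ℝ) :
    (Fin d → ℝ) → ℂ :=
  fun y => ∑ γ ∈ midxEq s m, ((-1 : ℂ) ^ (∑ i, γ i)) * a γ * (pderivM γ ψ y : ℂ)

/-- The distributional pairing `⟨𝓛f, ψ⟩ := ∫_D f ⋅ 𝓛*ψ`. -/
def Lpair (s : Fin d → ℕ) (m : ℕ) (a : (Fin d → ℕ) → ℂ) (D : Set (Fin d → ℝ))
    (f : (Fin d → ℝ) → ℂ) (ψ : (Fin d → ℝ) → ℝ) : ℂ :=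
  ∫ y in D, f y * Lstar s m a ψ y

/-- The negative Hölder norm of `𝓛f` on `A ⊆ D` (pairing integrals taken over `D`),
with exponent `β < 0`, i.e. the sup of `λ^{-β} |⟨𝓛f, φ_y^λ⟩|` over `φ ∈ ℬ_{⌈-β⌉}`,
`y ∈ A` and `λ > 0` with `B_λ(y) ⊆ A`. -/
def LnegOn (s : Fin d → ℕ) (m : ℕ) (a : (Fin d → ℕ) → ℂ) (D A : Set (Fin d → ℝ))
    (β : ℝ) (f : (Fin d → ℝ) → ℂ) : ℝ≥0∞ :=
  ⨆ φ : TestB s ⌈-β⌉₊, ⨆ y : A, ⨆ lam : {l : ℝ // 0 < l ∧ aball s y.1 l ⊆ A},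
    ENNReal.ofReal (lam.1 ^ (-β) *
      Norm.norm (Lpair s m a D f (tscale s φ.toFun y.1 lam.1)))

/-- The `G^{γ'}(D)` seminorm of the distributional germ `𝓛U`, for `γ' < 0`. -/
def LnegSemi (s : Fin d → ℕ) (m : ℕ) (a : (Fin d → ℕ) → ℂ) (D : Set (Fin d → ℝ))
    (γ' : ℝ) (U : (Fin d → ℝ) → (Fin d → ℝ) → ℂ) : ℝ≥0∞ :=
  ⨆ φ : TestB s ⌈-γ'⌉₊, ⨆ x : D, ⨆ lam : {l : ℝ // 0 < l ∧ aball s x.1 l ⊆ D},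
    ENNReal.ofReal (lam.1 ^ (-γ') *
      Norm.norm (Lpair s m a D (U x.1) (tscale s φ.toFun x.1 lam.1)))

/-- Ellipticity: the symbol `Σ_{|γ|=m} a_γ (iξ)^γ` does not vanish for `ξ ≠ 0`. -/
def IsElliptic (s : Fin d → ℕ) (m : ℕ) (a : (Fin d → ℕ) → ℂ) : Prop :=
  ∀ ξ : Fin d → ℝ, ξ ≠ 0 →
    (∑ γ ∈ midxEq s m, a γ * ∏ j, (Complex.I * (ξ j : ℂ)) ^ γ j) ≠ 0

open Classical in
/-- Coefficients of the Laplacian `Δ = Σ_j ∂_j^2`. -/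
def laplCoeff : (Fin d → ℕ) → ℂ :=
  fun γ => if ∃ j : Fin d, γ = Pi.single j 2 then 1 else 0

/-- Classical Hölder seminorm of a function on the set `A`, valued in `[0,∞]`. -/
def holderSemi (s : Fin d → ℕ) (A : Set (Fin d → ℝ)) (α : ℝ)
    (f : (Fin d → ℝ) → ℂ) : ℝ≥0∞ :=
  ⨆ y : A, ⨆ z : A, ⨆ _ : y.1 ≠ z.1,
    ENNReal.ofReal (Norm.norm (f y.1 - f z.1) / adist s y.1 z.1 ^ α)

/-- Polynomial-corrected Hölder seminorm of a function on the set `A`. -/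
def holderSemiP (s : Fin d → ℕ) (A : Set (Fin d → ℝ)) (α : ℝ)
    (f : (Fin d → ℝ) → ℂ) : ℝ≥0∞ :=
  ⨅ M : {M : ℝ // 0 < M ∧ ∀ y ∈ A, ∃ P : (Fin d → ℝ) → ℂ,
      IsAnisoPoly s (⌊α⌋ : ℝ) P ∧
      ∀ z ∈ A, Norm.norm (f z - P z) ≤ M * adist s z y ^ α}, ENNReal.ofReal M.1

/-! ### Parabolic setting -/

/-- The parabolic scaling on `ℝ^{1+d}`. -/
def spar (d : ℕ) : Fin (d + 1) → ℕ := Fin.cons 2 fun _ => 1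

/-- The adjoint heat operator `ψ ↦ -∂_t ψ - Δ_x ψ` (as a complex valued function). -/
def heatStar (d : ℕ) (ψ : (Fin (d + 1) → ℝ) → ℝ) : (Fin (d + 1) → ℝ) → ℂ :=
  fun y => ((- pderiv1 (0 : Fin (d + 1)) ψ y
    - ∑ j : Fin d, pderivM (Pi.single j.succ 2) ψ y : ℝ) : ℂ)

/-- Pairing `⟨(∂_t - Δ)f, ψ⟩ := ∫_D f ⋅ (-∂_t ψ - Δψ)`. -/
def heatPair (d : ℕ) (D : Set (Fin (d + 1) → ℝ)) (f : (Fin (d + 1) → ℝ) → ℂ)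
    (ψ : (Fin (d + 1) → ℝ) → ℝ) : ℂ :=
  ∫ y in D, f y * heatStar d ψ y

/-- The `G^{γ'}(D)` seminorm of `(∂_t - Δ)U` for `γ' < 0`. -/
def heatNegSemi (d : ℕ) (D : Set (Fin (d + 1) → ℝ)) (γ' : ℝ)
    (U : (Fin (d + 1) → ℝ) → (Fin (d + 1) → ℝ) → ℂ) : ℝ≥0∞ :=
  ⨆ φ : TestB (spar d) ⌈-γ'⌉₊, ⨆ x : D,
    ⨆ lam : {l : ℝ // 0 < l ∧ aball (spar d) x.1 l ⊆ D},
      ENNReal.ofReal (lam.1 ^ (-γ') *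
        Norm.norm (heatPair d D (U x.1) (tscale (spar d) φ.toFun x.1 lam.1)))

/-! ### Discrete setting -/

/-- The lattice point of `Λ_ε` indexed by `k ∈ ℤ^d`. -/
def latt (s : Fin d → ℕ) (ε : ℝ) (k : Fin d → ℤ) : Fin d → ℝ :=
  fun i => ε ^ (s i) * k i

/-- The lattice `Λ_ε = ε^{s_1}ℤ × ⋯ × ε^{s_d}ℤ` as a subset of `ℝ^d`. -/
def lattSet (s : Fin d → ℕ) (ε : ℝ) : Set (Fin d → ℝ) :=
  Set.range (latt s ε)

/-- Forward difference operator `D_{ε,j}`. -/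
def fdiff (s : Fin d → ℕ) (ε : ℝ) (j : Fin d) (u : (Fin d → ℝ) → ℂ) :
    (Fin d → ℝ) → ℂ :=
  fun k => (((ε ^ s j)⁻¹ : ℝ) : ℂ) * (u (k + (ε ^ s j) • (Pi.single j 1 : Fin d → ℝ)) - u k)

/-- Backward difference operator `D̄_{ε,j}`. -/
def bdiff (s : Fin d → ℕ) (ε : ℝ) (j : Fin d) (u : (Fin d → ℝ) → ℂ) :
    (Fin d → ℝ) → ℂ :=
  fun k => (((ε ^ s j)⁻¹ : ℝ) : ℂ) * (u k - u (k - (ε ^ s j) • (Pi.single j 1 : Fin d → ℝ)))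

/-- Iterated forward difference `D_ε^γ`. -/
def fdiffM (s : Fin d → ℕ) (ε : ℝ) (γ : Fin d → ℕ) (u : (Fin d → ℝ) → ℂ) :
    (Fin d → ℝ) → ℂ :=
  (List.finRange d).foldr (fun j v => (fdiff s ε j)^[γ j] v) u

/-- Iterated backward difference `D̄_ε^δ`. -/
def bdiffM (s : Fin d → ℕ) (ε : ℝ) (δ : Fin d → ℕ) (u : (Fin d → ℝ) → ℂ) :
    (Fin d → ℝ) → ℂ :=
  (List.finRange d).foldr (fun j v => (bdiff s ε j)^[δ j] v) u

/-- The discrete Laplacian `Δ_ε` (isotropic scaling). -/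
def discLap (ε : ℝ) (u : (Fin d → ℝ) → ℂ) : (Fin d → ℝ) → ℂ :=
  fun y => (((ε ^ 2)⁻¹ : ℝ) : ℂ) *
    ∑ j : Fin d, ((u (y + ε • (Pi.single j 1 : Fin d → ℝ)) - u y) + (u (y - ε • (Pi.single j 1 : Fin d → ℝ)) - u y))

/-- The discrete pairing `⟨f, g⟩_ε := ε^{s_1+⋯+s_d} Σ_{k ∈ Λ_ε} f(k) g(k)`. -/
def dpair (s : Fin d → ℕ) (ε : ℝ) (f : (Fin d → ℝ) → ℂ) (g : (Fin d → ℝ) → ℝ) : ℂ :=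
  ((ε ^ (∑ i, s i) : ℝ) : ℂ) * ∑' k : Fin d → ℤ, f (latt s ε k) * (g (latt s ε k) : ℂ)

/-- The discrete `G^{γ'}(Λ_ε)` seminorm of a germ `V` on `Λ_ε`, for `γ' < 0`. -/
def dnegSemi (s : Fin d → ℕ) (ε : ℝ) (γ' : ℝ)
    (V : (Fin d → ℝ) → (Fin d → ℝ) → ℂ) : ℝ≥0∞ :=
  ⨆ φ : TestB s ⌈-γ'⌉₊, ⨆ k : Fin d → ℤ, ⨆ lam : {l : ℝ // ε ≤ l},
    ENNReal.ofReal (lam.1 ^ (-γ') *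
      Norm.norm (dpair s ε (V (latt s ε k)) (tscale s φ.toFun (latt s ε k) lam.1)))

/-- Pairs of multi-indices with `|γ| + |δ| = m`. -/
def pairsEq (s : Fin d → ℕ) (m : ℕ) : Finset ((Fin d → ℕ) × (Fin d → ℕ)) :=
  ((Fintype.piFinset fun _ => Finset.range (m + 1)) ×ˢ
      (Fintype.piFinset fun _ => Finset.range (m + 1))).filter
    fun p => (∑ i, s i * p.1 i) + (∑ i, s i * p.2 i) = m

/-- The discrete difference operator `L_ε = Σ_{|γ|+|δ|=m} a_{γ,δ} D_ε^γ D̄_ε^δ`. -/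
def diffOpPair (s : Fin d → ℕ) (ε : ℝ) (m : ℕ)
    (a : (Fin d → ℕ) × (Fin d → ℕ) → ℂ) (u : (Fin d → ℝ) → ℂ) :
    (Fin d → ℝ) → ℂ :=
  fun y => ∑ p ∈ pairsEq s m, a p * fdiffM s ε p.1 (bdiffM s ε p.2 u) y

/-- The discrete symbol component `ξ^ε_{θ,j} = i ε^{-s_j} (1 - e^{i ε^{s_j} θ_j})`. -/
def xiSym (s : Fin d → ℕ) (ε : ℝ) (θ : Fin d → ℝ) (j : Fin d) : ℂ :=
  Complex.I * (((ε ^ s j)⁻¹ : ℝ) : ℂ) *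
    (1 - Complex.exp (Complex.I * ((ε ^ s j * θ j : ℝ) : ℂ)))

/-- The discrete symbol `L̂_ε(θ)`. -/
def Lhatε (s : Fin d → ℕ) (m : ℕ) (a : (Fin d → ℕ) × (Fin d → ℕ) → ℂ)
    (ε : ℝ) (θ : Fin d → ℝ) : ℂ :=
  ∑ p ∈ pairsEq s m, a p * (∏ j, (Complex.I * xiSym s ε θ j) ^ p.1 j) *
    (∏ j, (Complex.I * (starRingEnd ℂ) (xiSym s ε θ j)) ^ p.2 j)

/-- The continuous symbol `L̂(ξ) = Σ a_{γ,δ} (iξ)^{γ+δ}`. -/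
def LhatC (s : Fin d → ℕ) (m : ℕ) (a : (Fin d → ℕ) × (Fin d → ℕ) → ℂ)
    (ξ : Fin d → ℝ) : ℂ :=
  ∑ p ∈ pairsEq s m, a p * ∏ j, (Complex.I * (ξ j : ℂ)) ^ (p.1 j + p.2 j)

/-! ### Locally uniform seminorms -/

/-- The locally uniform supremum `‖U‖_{<R}`, valued in `[0,∞]`. -/
def germSup (s : Fin d → ℕ) (R : ℝ)
    (U : (Fin d → ℝ) → (Fin d → ℝ) → ℂ) : ℝ≥0∞ :=
  ⨆ p : {p : (Fin d → ℝ) × (Fin d → ℝ) // adist s p.1 p.2 < R},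
    ENNReal.ofReal (Norm.norm (U p.1.1 p.1.2))

/-- The locally uniform seminorm `[U]_{G_R^η}`. -/
def germNormLoc (s : Fin d → ℕ) (R η : ℝ)
    (U : (Fin d → ℝ) → (Fin d → ℝ) → ℂ) : ℝ≥0∞ :=
  ⨆ p : {p : (Fin d → ℝ) × (Fin d → ℝ) // 0 < adist s p.1 p.2 ∧ adist s p.1 p.2 < R},
    ENNReal.ofReal (Norm.norm (U p.1.1 p.1.2) / adist s p.1.1 p.1.2 ^ η)

/-- The locally uniform seminorm `[U]_{G_R^{η,α}}`. -/
def germHALoc (s : Fin d → ℕ) (R η α : ℝ)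
    (U : (Fin d → ℝ) → (Fin d → ℝ) → ℂ) : ℝ≥0∞ :=
  ⨆ p : {p : (Fin d → ℝ) × (Fin d → ℝ) // 0 < adist s p.1 p.2 ∧ adist s p.1 p.2 < R},
    ⨅ P : {P : (Fin d → ℝ) → ℂ // IsAnisoPoly s (⌊η⌋ : ℝ) P},
      ⨆ z : {z : Fin d → ℝ // 0 < adist s p.1.2 z ∧ adist s p.1.2 z < R},
        ENNReal.ofReal (Norm.norm (U p.1.1 z.1 - U p.1.2 z.1 - P.1 z.1) /
          (adist s p.1.2 z.1 ^ α * (adist s p.1.1 p.1.2 + adist s p.1.2 z.1) ^ (η - α)))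

/-- The locally uniform seminorm `[𝓛U]_{G_R^β}` for `β < 0` (pairings over all of `ℝ^d`). -/
def LnegSemiLoc (s : Fin d → ℕ) (m : ℕ) (a : (Fin d → ℕ) → ℂ) (R β : ℝ)
    (U : (Fin d → ℝ) → (Fin d → ℝ) → ℂ) : ℝ≥0∞ :=
  ⨆ φ : TestB s ⌈-β⌉₊, ⨆ x : Fin d → ℝ, ⨆ lam : {l : ℝ // 0 < l ∧ l < R},
    ENNReal.ofReal (lam.1 ^ (-β) *
      Norm.norm (Lpair s m a Set.univ (U x) (tscale s φ.toFun x lam.1)))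


private lemma real_rpow_add_le {a b p : ℝ} (ha : 0 ≤ a) (hb : 0 ≤ b) (hp : 0 ≤ p)
    (hp1 : p ≤ 1) : (a + b) ^ p ≤ a ^ p + b ^ p := by
  have h := NNReal.rpow_add_le_add_rpow a.toNNReal b.toNNReal hp hp1
  have h2 := NNReal.coe_le_coe.mpr h
  push_cast at h2
  rwa [Real.coe_toNNReal a ha, Real.coe_toNNReal b hb] at h2

private lemma adist_nonneg' (s : Fin d → ℕ) (x y : Fin d → ℝ) : 0 ≤ adist s x y :=
  Finset.sum_nonneg fun _ _ => Real.rpow_nonneg (abs_nonneg _) _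

private lemma adist_comm' (s : Fin d → ℕ) (x y : Fin d → ℝ) : adist s x y = adist s y x :=
  Finset.sum_congr rfl fun i _ => by rw [abs_sub_comm]

private lemma adist_self' (s : Fin d → ℕ) (hs : ∀ i, 0 < s i) (x : Fin d → ℝ) :
    adist s x x = 0 :=
  Finset.sum_eq_zero fun i _ => by
    rw [sub_self, abs_zero, Real.zero_rpow (inv_ne_zero (Nat.cast_ne_zero.mpr (hs i).ne'))]

private lemma adist_pos' (s : Fin d → ℕ) {x y : Fin d → ℝ} (h : x ≠ y) : 0 < adist s x y := by
  obtain ⟨i, hi⟩ := Function.ne_iff.mp h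
  exact Finset.sum_pos' (fun j _ => Real.rpow_nonneg (abs_nonneg _) _)
    ⟨i, Finset.mem_univ i, Real.rpow_pos_of_pos (abs_pos.mpr (sub_ne_zero.mpr hi)) _⟩

private lemma adist_triangle' (s : Fin d → ℕ) (hs : ∀ i, 0 < s i) (x y z : Fin d → ℝ) :
    adist s x z ≤ adist s x y + adist s y z := by
  unfold adist
  rw [← Finset.sum_add_distrib]
  refine Finset.sum_le_sum fun i _ => ?_
  have h2 : (0:ℝ) ≤ (s i : ℝ)⁻¹ := by positivity
  calc |x i - z i| ^ ((s i:ℝ)⁻¹)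
      ≤ (|x i - y i| + |y i - z i|) ^ ((s i:ℝ)⁻¹) :=
        Real.rpow_le_rpow (abs_nonneg _) (abs_sub_le _ _ _) h2
    _ ≤ |x i - y i| ^ ((s i:ℝ)⁻¹) + |y i - z i| ^ ((s i:ℝ)⁻¹) :=
        real_rpow_add_le (abs_nonneg _) (abs_nonneg _) h2
          (inv_le_one_of_one_le₀ (by exact_mod_cast hs i))

private lemma coord_le_adist (s : Fin d → ℕ) (i : Fin d) (x y : Fin d → ℝ) :
    |x i - y i| ^ ((s i : ℝ)⁻¹) ≤ adist s x y :=
  Finset.single_le_sum (f := fun j => |x j - y j| ^ ((s j : ℝ)⁻¹))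
    (fun j _ => Real.rpow_nonneg (abs_nonneg _) _) (Finset.mem_univ i)

private lemma adist_shift (s : Fin d → ℕ) (hs : ∀ i, 0 < s i) (i : Fin d) (hsi : s i = 1)
    {t : ℝ} (ht : 0 ≤ t) (y : Fin d → ℝ) :
    adist s y (y + t • (Pi.single i 1 : Fin d → ℝ)) = t := by
  unfold adist
  rw [Finset.sum_eq_single i]
  · have h : y i - (y + t • (Pi.single i 1 : Fin d → ℝ)) i = -t := by
      simp [Pi.single_eq_same]
    rw [h, abs_neg, abs_of_nonneg ht, hsi, Nat.cast_one, inv_one, Real.rpow_one]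
  · intro j _ hji
    have h : y j - (y + t • (Pi.single i 1 : Fin d → ℝ)) j = 0 := by
      simp [Pi.single_eq_of_ne hji]
    rw [h, abs_zero, Real.zero_rpow (inv_ne_zero (Nat.cast_ne_zero.mpr (hs j).ne'))]
  · intro h; exact absurd (Finset.mem_univ i) h

private lemma midx_classify (s : Fin d → ℕ) (hs : ∀ i, 0 < s i) (γ : Fin d →₀ ℕ)
    (h : (∑ i, s i * γ i) ≤ 1) : γ = 0 ∨ ∃ i, γ = Finsupp.single i 1 := by
  by_cases h0 : γ = 0
  · exact Or.inl h0
  right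
  have hne : ∃ i, γ i ≠ 0 := by
    by_contra hc; push_neg at hc
    exact h0 (Finsupp.ext fun i => hc i)
  obtain ⟨i, hi⟩ := hne
  have hγi : 1 ≤ γ i := Nat.one_le_iff_ne_zero.mpr hi
  have hterm : 1 ≤ s i * γ i := Nat.one_le_iff_ne_zero.mpr (Nat.mul_ne_zero (hs i).ne' hi)
  have hsplit : s i * γ i + ∑ j ∈ Finset.univ.erase i, s j * γ j = ∑ j, s j * γ j :=
    Finset.add_sum_erase _ (fun j => s j * γ j) (Finset.mem_univ i)
  have hrest : ∑ j ∈ Finset.univ.erase i, s j * γ j = 0 := by omega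
  have hii : s i * γ i = 1 := by omega
  refine ⟨i, Finsupp.ext fun j => ?_⟩
  rcases eq_or_ne j i with rfl | hji
  · rw [Finsupp.single_eq_same]
    have hle : γ j ≤ s j * γ j := Nat.le_mul_of_pos_left (γ j) (hs j)
    omega
  · have hj : s j * γ j = 0 :=
      (Finset.sum_eq_zero_iff.mp hrest) j (Finset.mem_erase.mpr ⟨hji, Finset.mem_univ j⟩)
    have : γ j = 0 := by
      rcases Nat.mul_eq_zero.mp hj with h' | h'
      · exact absurd h' (hs j).ne'
      · exact h'
    rw [this, Finsupp.single_eq_of_ne' (Ne.symm hji)]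

private lemma eval_sub_affine (s : Fin d → ℕ) (hs : ∀ i, 0 < s i)
    (p : MvPolynomial (Fin d) ℂ)
    (hp : ∀ γ ∈ p.support, (∑ i, s i * γ i) ≤ 1) (u v : Fin d → ℂ) :
    MvPolynomial.eval u p - MvPolynomial.eval v p
      = ∑ i, MvPolynomial.coeff (Finsupp.single i 1) p * (u i - v i) := by
  classical
  set F : (Fin d →₀ ℕ) → ℂ := fun γ =>
    MvPolynomial.coeff γ p * (∏ i ∈ γ.support, u i ^ γ i - ∏ i ∈ γ.support, v i ^ γ i) with hF
  have hstep : MvPolynomial.eval u p - MvPolynomial.eval v p = ∑ γ ∈ p.support, F γ := by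
    rw [MvPolynomial.eval_eq, MvPolynomial.eval_eq, ← Finset.sum_sub_distrib]
    exact Finset.sum_congr rfl fun γ _ => by rw [hF]; ring
  set T : Finset (Fin d →₀ ℕ) :=
    Finset.image (fun i => Finsupp.single i (1:ℕ)) Finset.univ with hT
  have hsub : p.support ⊆ insert 0 T := by
    intro γ hγ
    rcases midx_classify s hs γ (hp γ hγ) with rfl | ⟨i, rfl⟩
    · exact Finset.mem_insert_self _ _
    · exact Finset.mem_insert_of_mem (Finset.mem_image_of_mem _ (Finset.mem_univ i))
  have h0T : (0 : Fin d →₀ ℕ) ∉ T := by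
    simp only [hT, Finset.mem_image]
    rintro ⟨i, -, hi⟩
    exact one_ne_zero (Finsupp.single_eq_zero.mp hi)
  rw [hstep, Finset.sum_subset hsub (fun γ _ hγn => by
    rw [hF]; simp [MvPolynomial.notMem_support_iff.mp hγn]),
    Finset.sum_insert h0T]
  have hF0 : F 0 = 0 := by simp [hF]
  rw [hF0, zero_add, Finset.sum_image (fun i _ j _ h =>
    Finsupp.single_left_injective one_ne_zero h)]
  refine Finset.sum_congr rfl fun i _ => ?_
  rw [hF]
  have hsupp : (Finsupp.single i (1:ℕ)).support = {i} := Finsupp.support_single_ne_zero i one_ne_zero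
  simp [hsupp]

private lemma coeff_single_zero (s : Fin d → ℕ) (p : MvPolynomial (Fin d) ℂ)
    (hp : ∀ γ ∈ p.support, (∑ i, s i * γ i) ≤ 1) (i : Fin d) (h2 : 2 ≤ s i) :
    MvPolynomial.coeff (Finsupp.single i 1) p = 0 := by
  by_contra h
  have hmem := MvPolynomial.mem_support_iff.mpr h
  have hb := hp _ hmem
  have hsum : ∑ j, s j * (Finsupp.single i (1:ℕ)) j = s i := by
    rw [Finset.sum_eq_single i]
    · rw [Finsupp.single_eq_same, mul_one]
    · intro j _ hji; rw [Finsupp.single_eq_of_ne' (Ne.symm hji), mul_zero]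
    · intro h'; exact absurd (Finset.mem_univ i) h'
  omega


private lemma rpow_base_le {b : ℝ} (hb : 1 ≤ b) {e : ℝ} (he : e ≤ 2) :
    b ^ e ≤ b ^ (2 : ℕ) := by
  calc b ^ e ≤ b ^ (((2:ℕ) : ℝ)) := Real.rpow_le_rpow_of_exponent_le hb (by exact_mod_cast he)
    _ = b ^ (2:ℕ) := Real.rpow_natCast b 2

set_option maxHeartbeats 1000000 in
private lemma core_bound (s : Fin d → ℕ) (hs : ∀ i, 0 < s i)
    {α η : ℝ} (hα : 0 < α) (hα1 : α < 1) (hη1 : 1 < η) (hη2 : η < 2)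
    {D : Set (Fin d → ℝ)}
    (hD : ∀ i : Fin d, s i = 1 → ∀ x ∈ D, ∀ y ∈ D,
        (y + adist s x y • (Pi.single i 1 : Fin d → ℝ)) ∈ D)
    {U : (Fin d → ℝ) → (Fin d → ℝ) → ℂ}
    {M₁ M₂ : ℝ} (hM₁ : 0 < M₁)
    (h1 : ∀ x ∈ D, ∀ y ∈ D, Norm.norm (U x y) ≤ M₁ * adist s x y ^ η)
    (hM₂ : 0 < M₂)
    (h2 : ∀ x ∈ D, ∀ y ∈ D, ∃ P : (Fin d → ℝ) → ℂ,
      IsAnisoPoly s (⌊η⌋ : ℝ) P ∧ ∀ z ∈ D,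
      Norm.norm (U x z - U y z - P z) ≤
        M₂ * adist s y z ^ α * (adist s x y + adist s y z) ^ (η - α))
    {R : ℝ} (hR : 0 < R) {x y z : Fin d → ℝ} (hx : x ∈ D) (hy : y ∈ D) (hz : z ∈ D)
    (hxy : adist s x y < R) (hxz : adist s x z < R) (hyz : y ≠ z) :
    Norm.norm (U x y - U x z) ≤
      (12 * d + 9) * (M₁ + M₂) * R ^ (η - α) * adist s y z ^ α := by
  have hηα : 0 < η - α := by linarith
  have hη0 : (0:ℝ) < η := by linarith
  set t := adist s x y with htdef
  set r := adist s y z with hrdef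
  have ht0 : 0 ≤ t := adist_nonneg' s x y
  have hr : 0 < r := adist_pos' s hyz
  have hr2R : r < 2 * R := by
    have htri := adist_triangle' s hs y x z
    rw [adist_comm' s y x] at htri
    linarith
  have hRp : (0:ℝ) < R ^ (η - α) := Real.rpow_pos_of_pos hR _
  have hrα : (0:ℝ) < r ^ α := Real.rpow_pos_of_pos hr _
  have hX : (0:ℝ) < R ^ (η - α) * r ^ α := mul_pos hRp hrα
  -- B1 : r ^ η ≤ 4 * (R ^ (η-α) * r ^ α)
  have hrsplit : r ^ η = r ^ α * r ^ (η - α) := by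
    rw [← Real.rpow_add hr, show α + (η - α) = η by ring]
  have hB1 : r ^ η ≤ 4 * (R ^ (η - α) * r ^ α) := by
    have h1' : r ^ (η - α) ≤ (2 * R) ^ (η - α) :=
      Real.rpow_le_rpow hr.le hr2R.le hηα.le
    have h2' : ((2:ℝ) * R) ^ (η - α) = 2 ^ (η - α) * R ^ (η - α) :=
      Real.mul_rpow (by norm_num) hR.le
    have h3' : (2:ℝ) ^ (η - α) ≤ 4 := by
      have := rpow_base_le (b := 2) one_le_two (e := η - α) (by linarith)
      norm_num at this; linarith
    have h4' : r ^ (η - α) ≤ 4 * R ^ (η - α) := by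
      rw [h2'] at h1'
      nlinarith
    rw [hrsplit]; nlinarith
  -- B2 : r ^ α * (t + r) ^ (η - α) ≤ 9 * (R ^ (η-α) * r ^ α)
  have hB2 : r ^ α * (t + r) ^ (η - α) ≤ 9 * (R ^ (η - α) * r ^ α) := by
    have h1' : (t + r) ^ (η - α) ≤ (3 * R) ^ (η - α) :=
      Real.rpow_le_rpow (by linarith) (by linarith) hηα.le
    have h2' : ((3:ℝ) * R) ^ (η - α) = 3 ^ (η - α) * R ^ (η - α) :=
      Real.mul_rpow (by norm_num) hR.le
    have h3' : (3:ℝ) ^ (η - α) ≤ 9 := by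
      have := rpow_base_le (b := 3) (by norm_num) (e := η - α) (by linarith)
      norm_num at this; linarith
    have h4' : (t + r) ^ (η - α) ≤ 9 * R ^ (η - α) := by rw [h2'] at h1'; nlinarith
    nlinarith
  by_cases hxy0 : x = y
  · -- trivial case x = y
    have hUyy : U y y = 0 := by
      have h0 := h1 y hy y hy
      rw [adist_self' s hs, Real.zero_rpow hη0.ne', mul_zero] at h0
      exact norm_le_zero_iff.mp h0
    subst hxy0
    have hUyz : ‖U x z‖ ≤ M₁ * r ^ η := by
      have h' := h1 x hx z hz
      rwa [← hrdef] at h'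
    calc ‖U x x - U x z‖ = ‖U x z‖ := by rw [hUyy, zero_sub, norm_neg]
      _ ≤ M₁ * r ^ η := hUyz
      _ ≤ M₁ * (4 * (R ^ (η - α) * r ^ α)) := by nlinarith
      _ ≤ (12 * d + 9) * (M₁ + M₂) * R ^ (η - α) * r ^ α := by
          have hd0 : (0:ℝ) ≤ (d:ℝ) := Nat.cast_nonneg d
          nlinarith [mul_nonneg (mul_nonneg hd0 (by linarith : (0:ℝ) ≤ M₁ + M₂)) hX.le]
  · -- main case
    have ht : 0 < t := adist_pos' s hxy0
    obtain ⟨P, hPpoly, hPbd⟩ := h2 x hx y hy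
    obtain ⟨p, hpsupp, hpeval⟩ := hPpoly
    have hfl : ⌊η⌋ = 1 := by
      rw [Int.floor_eq_iff]
      constructor
      · exact_mod_cast hη1.le
      · push_cast; linarith
    have hpN : ∀ γ ∈ p.support, (∑ i, s i * γ i) ≤ 1 := by
      intro γ hγ
      have := hpsupp γ hγ
      rw [hfl] at this
      exact_mod_cast this
    have hUyy : U y y = 0 := by
      have h0 := h1 y hy y hy
      rw [adist_self' s hs, Real.zero_rpow hη0.ne', mul_zero] at h0
      exact norm_le_zero_iff.mp h0
    have hPy : P y = U x y := by
      have e1 := hPbd y hy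
      rw [adist_self' s hs, Real.zero_rpow hα.ne', mul_zero, zero_mul] at e1
      have e2 : U x y - U y y - P y = 0 := norm_le_zero_iff.mp e1
      rw [hUyy, sub_zero] at e2
      exact (sub_eq_zero.mp e2).symm
    have hUxy : ‖U x y‖ ≤ M₁ * t ^ η := h1 x hx y hy
    -- coefficient bound
    have Hc : ∀ i, ‖MvPolynomial.coeff (Finsupp.single i 1) p‖ * |y i - z i| ≤
        6 * (M₁ + M₂) * (t ^ (η - 1) * r) := by
      intro i
      have hrhs0 : (0:ℝ) ≤ 6 * (M₁ + M₂) * (t ^ (η - 1) * r) := by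
        have : (0:ℝ) ≤ t ^ (η - 1) := Real.rpow_nonneg ht0 _
        positivity
      rcases Nat.lt_or_ge (s i) 2 with hsi | hsi
      · -- s i = 1
        have hsi1 : s i = 1 := by have := hs i; omega
        set w : Fin d → ℝ := y + t • (Pi.single i 1 : Fin d → ℝ) with hwdef
        have hwD : w ∈ D := hD i hsi1 x hx y hy
        have hyw : adist s y w = t := adist_shift s hs i hsi1 ht0 y
        have hxw : adist s x w ≤ 2 * t := by
          have := adist_triangle' s hs x y w
          rw [hyw] at this; linarith
        have h4t : (2 * t) ^ η ≤ 4 * t ^ η := by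
          have e1 : ((2:ℝ) * t) ^ η = 2 ^ η * t ^ η := Real.mul_rpow (by norm_num) ht0
          have e2 : (2:ℝ) ^ η ≤ 4 := by
            have := rpow_base_le (b := 2) one_le_two hη2.le
            norm_num at this; linarith
          have e3 : (0:ℝ) ≤ t ^ η := Real.rpow_nonneg ht0 _
          rw [e1]; nlinarith
        have hUxw : ‖U x w‖ ≤ 4 * M₁ * t ^ η := by
          have := h1 x hx w hwD
          have e1 : adist s x w ^ η ≤ (2 * t) ^ η :=
            Real.rpow_le_rpow (adist_nonneg' s x w) hxw hη0.le
          nlinarith [this]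
        have hUyw : ‖U y w‖ ≤ M₁ * t ^ η := by
          have := h1 y hy w hwD
          rwa [hyw] at this
        have hEw : ‖U x w - U y w - P w‖ ≤ 4 * M₂ * t ^ η := by
          have := hPbd w hwD
          rw [hyw] at this
          have e1 : (t + t) ^ (η - α) ≤ 4 * t ^ (η - α) := by
            have e2 : ((2:ℝ) * t) ^ (η - α) = 2 ^ (η - α) * t ^ (η - α) :=
              Real.mul_rpow (by norm_num) ht0
            have e3 : (2:ℝ) ^ (η - α) ≤ 4 := by
              have := rpow_base_le (b := 2) one_le_two (e := η - α) (by linarith)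
              norm_num at this; linarith
            have e4 : (0:ℝ) ≤ t ^ (η - α) := Real.rpow_nonneg ht0 _
            rw [show t + t = 2 * t by ring, e2]; nlinarith
          have e5 : t ^ α * t ^ (η - α) = t ^ η := by
            rw [← Real.rpow_add ht, show α + (η - α) = η by ring]
          have e6 : (0:ℝ) ≤ t ^ α := Real.rpow_nonneg ht0 _
          calc ‖U x w - U y w - P w‖ ≤ M₂ * t ^ α * (t + t) ^ (η - α) := this
            _ ≤ M₂ * t ^ α * (4 * t ^ (η - α)) := by
                have := mul_le_mul_of_nonneg_left e1 (mul_nonneg hM₂.le e6)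
                nlinarith [this]
            _ = 4 * M₂ * t ^ η := by rw [← e5]; ring
        have hPw : ‖P w‖ ≤ (5 * M₁ + 4 * M₂) * t ^ η := by
          have hid : P w = U x w - U y w - (U x w - U y w - P w) := by ring
          calc ‖P w‖ = ‖U x w - U y w - (U x w - U y w - P w)‖ := by rw [← hid]
            _ ≤ ‖U x w - U y w‖ + ‖U x w - U y w - P w‖ := norm_sub_le _ _
            _ ≤ ‖U x w‖ + ‖U y w‖ + ‖U x w - U y w - P w‖ := by
                have := norm_sub_le (U x w) (U y w); linarith
            _ ≤ (5 * M₁ + 4 * M₂) * t ^ η := by linarith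
        -- P w - P y = c_i * t
        have hdiff : P w - P y = MvPolynomial.coeff (Finsupp.single i 1) p * (t : ℂ) := by
          rw [hpeval w, hpeval y, eval_sub_affine s hs p hpN]
          rw [Finset.sum_eq_single i]
          · congr 1
            have : w i = y i + t := by simp [hwdef, Pi.single_eq_same]
            rw [this]; push_cast; ring
          · intro j _ hji
            have : w j = y j := by simp [hwdef, Pi.single_eq_of_ne hji]
            rw [this, sub_self, mul_zero]
          · intro h'; exact absurd (Finset.mem_univ i) h'
        have hci : ‖MvPolynomial.coeff (Finsupp.single i 1) p‖ * t ≤ 6 * (M₁ + M₂) * t ^ η := by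
          have e1 : ‖MvPolynomial.coeff (Finsupp.single i 1) p * (t:ℂ)‖ =
              ‖MvPolynomial.coeff (Finsupp.single i 1) p‖ * t := by
            rw [norm_mul, Complex.norm_real, Real.norm_eq_abs, abs_of_nonneg ht0]
          have e3 : ‖P y‖ ≤ M₁ * t ^ η := by rw [hPy]; exact hUxy
          have e4 : ‖P w - P y‖ ≤ (5 * M₁ + 4 * M₂) * t ^ η + M₁ * t ^ η := by
            have := norm_sub_le (P w) (P y); linarith
          rw [hdiff, e1] at e4
          nlinarith [mul_nonneg hM₂.le (Real.rpow_nonneg ht0 η), e4]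
        have hci' : ‖MvPolynomial.coeff (Finsupp.single i 1) p‖ ≤
            6 * (M₁ + M₂) * t ^ (η - 1) := by
          have e1 : t ^ (η - 1) * t = t ^ η := by
            rw [← Real.rpow_add_one ht.ne' (η - 1), show η - 1 + 1 = η by ring]
          rw [← e1] at hci
          have hci2 : ‖MvPolynomial.coeff (Finsupp.single i 1) p‖ * t ≤
              6 * (M₁ + M₂) * t ^ (η - 1) * t := by
            calc ‖MvPolynomial.coeff (Finsupp.single i 1) p‖ * t
                ≤ 6 * (M₁ + M₂) * (t ^ (η - 1) * t) := hci
              _ = 6 * (M₁ + M₂) * t ^ (η - 1) * t := by ring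
          exact le_of_mul_le_mul_right hci2 ht
        have hyzi : |y i - z i| ≤ r := by
          have := coord_le_adist s i y z
          rwa [hsi1, Nat.cast_one, inv_one, Real.rpow_one] at this
        calc ‖MvPolynomial.coeff (Finsupp.single i 1) p‖ * |y i - z i|
            ≤ (6 * (M₁ + M₂) * t ^ (η - 1)) * r := by
              apply mul_le_mul hci' hyzi (abs_nonneg _)
              have : (0:ℝ) ≤ t ^ (η - 1) := Real.rpow_nonneg ht0 _
              positivity
          _ = 6 * (M₁ + M₂) * (t ^ (η - 1) * r) := by ring
      · -- s i ≥ 2 : coefficient vanishes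
        rw [coeff_single_zero s p hpN i hsi, norm_zero, zero_mul]
        exact hrhs0
    -- bound on P y - P z
    have hB3 : t ^ (η - 1) * r ≤ 2 * (R ^ (η - α) * r ^ α) := by
      have e1 : r ^ (1 - α) * r ^ α = r := by
        rw [← Real.rpow_add hr, show 1 - α + α = 1 by ring, Real.rpow_one]
      have e2 : t ^ (η - 1) ≤ R ^ (η - 1) :=
        Real.rpow_le_rpow ht0 hxy.le (by linarith)
      have e3 : r ^ (1 - α) ≤ (2 * R) ^ (1 - α) :=
        Real.rpow_le_rpow hr.le hr2R.le (by linarith)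
      have e4 : ((2:ℝ) * R) ^ (1 - α) = 2 ^ (1 - α) * R ^ (1 - α) :=
        Real.mul_rpow (by norm_num) hR.le
      have e5 : (2:ℝ) ^ (1 - α) ≤ 2 := by
        calc (2:ℝ) ^ (1 - α) ≤ 2 ^ (1:ℝ) :=
              Real.rpow_le_rpow_of_exponent_le one_le_two (by linarith)
          _ = 2 := Real.rpow_one 2
      have e6 : R ^ (η - 1) * R ^ (1 - α) = R ^ (η - α) := by
        rw [← Real.rpow_add hR, show η - 1 + (1 - α) = η - α by ring]
      have p1 : (0:ℝ) ≤ t ^ (η - 1) := Real.rpow_nonneg ht0 _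
      have p2 : (0:ℝ) ≤ R ^ (η - 1) := Real.rpow_nonneg hR.le _
      have p3 : (0:ℝ) ≤ r ^ (1 - α) := Real.rpow_nonneg hr.le _
      have p4 : (0:ℝ) ≤ R ^ (1 - α) := Real.rpow_nonneg hR.le _
      have q1 : r ^ (1 - α) * r ^ α ≤ ((2 * R) ^ (1 - α)) * r ^ α :=
        mul_le_mul_of_nonneg_right e3 hrα.le
      have q2 : ((2 * R) ^ (1 - α)) * r ^ α ≤ (2 * R ^ (1 - α)) * r ^ α := by
        rw [e4]
        exact mul_le_mul_of_nonneg_right (mul_le_mul_of_nonneg_right e5 p4) hrα.le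
      have q3 : t ^ (η - 1) * (r ^ (1 - α) * r ^ α) ≤
          R ^ (η - 1) * ((2 * R ^ (1 - α)) * r ^ α) :=
        mul_le_mul e2 (q1.trans q2) (mul_nonneg p3 hrα.le) p2
      calc t ^ (η - 1) * r = t ^ (η - 1) * (r ^ (1 - α) * r ^ α) := by rw [e1]
        _ ≤ R ^ (η - 1) * ((2 * R ^ (1 - α)) * r ^ α) := q3
        _ = 2 * (R ^ (η - 1) * R ^ (1 - α) * r ^ α) := by ring
        _ = 2 * (R ^ (η - α) * r ^ α) := by rw [e6]
    have hPyz : ‖P y - P z‖ ≤ 12 * d * (M₁ + M₂) * R ^ (η - α) * r ^ α := by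
      have hsum : P y - P z = ∑ i, MvPolynomial.coeff (Finsupp.single i 1) p *
          (((y i : ℝ) : ℂ) - ((z i : ℝ) : ℂ)) := by
        rw [hpeval y, hpeval z, eval_sub_affine s hs p hpN]
      calc ‖P y - P z‖ ≤ ∑ i, ‖MvPolynomial.coeff (Finsupp.single i 1) p *
            (((y i : ℝ) : ℂ) - ((z i : ℝ) : ℂ))‖ := by
            rw [hsum]; exact norm_sum_le _ _
        _ = ∑ i, ‖MvPolynomial.coeff (Finsupp.single i 1) p‖ * |y i - z i| := by
            refine Finset.sum_congr rfl fun i _ => ?_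
            rw [norm_mul]
            congr 1
            rw [show (((y i : ℝ) : ℂ) - ((z i : ℝ) : ℂ)) = (((y i - z i : ℝ)) : ℂ) by push_cast; ring,
              Complex.norm_real, Real.norm_eq_abs]
        _ ≤ ∑ _i : Fin d, 6 * (M₁ + M₂) * (t ^ (η - 1) * r) :=
            Finset.sum_le_sum fun i _ => Hc i
        _ = d * (6 * (M₁ + M₂) * (t ^ (η - 1) * r)) := by
            rw [Finset.sum_const, Finset.card_univ, Fintype.card_fin, nsmul_eq_mul]
        _ ≤ 12 * d * (M₁ + M₂) * R ^ (η - α) * r ^ α := by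
            have hd0 : (0:ℝ) ≤ (d:ℝ) := Nat.cast_nonneg d
            nlinarith [mul_nonneg hd0 (by linarith : (0:ℝ) ≤ M₁ + M₂), hB3,
              mul_nonneg (mul_nonneg hd0 (by linarith : (0:ℝ) ≤ M₁ + M₂)) hX.le]
    have hEz : ‖U x z - U y z - P z‖ ≤ 9 * M₂ * R ^ (η - α) * r ^ α := by
      have := hPbd z hz
      calc ‖U x z - U y z - P z‖ ≤ M₂ * r ^ α * (t + r) ^ (η - α) := this
        _ ≤ 9 * M₂ * R ^ (η - α) * r ^ α := by nlinarith [hB2]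
    have hUyz : ‖U y z‖ ≤ 4 * M₁ * R ^ (η - α) * r ^ α := by
      have := h1 y hy z hz
      rw [← hrdef] at this
      nlinarith [hB1]
    have hid : U x y - U x z = (P y - P z) - U y z - (U x z - U y z - P z) := by
      rw [hPy]; ring
    calc ‖U x y - U x z‖ = ‖(P y - P z) - U y z - (U x z - U y z - P z)‖ := by rw [← hid]
      _ ≤ ‖(P y - P z) - U y z‖ + ‖U x z - U y z - P z‖ := norm_sub_le _ _
      _ ≤ ‖P y - P z‖ + ‖U y z‖ + ‖U x z - U y z - P z‖ := by
          have := norm_sub_le (P y - P z) (U y z); linarith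
      _ ≤ (12 * d + 9) * (M₁ + M₂) * R ^ (η - α) * r ^ α := by
          have hd0 : (0:ℝ) ≤ (d:ℝ) := Nat.cast_nonneg d
          nlinarith [mul_nonneg hM₁.le hX.le, mul_nonneg hM₂.le hX.le,
            mul_nonneg (mul_nonneg hd0 (by linarith : (0:ℝ) ≤ M₁ + M₂)) hX.le]

private lemma le_mul_iInf_add_iInf_mul {ι κ : Sort*} {c r u : ℝ≥0∞}
    (hc0 : c ≠ 0) (hct : c ≠ ⊤) (hr0 : r ≠ 0) (hrt : r ≠ ⊤)
    (f : ι → ℝ≥0∞) (g : κ → ℝ≥0∞)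
    (h : ∀ i j, u ≤ c * (f i + g j) * r) : u ≤ c * (iInf f + iInf g) * r := by
  rcases isEmpty_or_nonempty ι with hι | hι
  · rw [iInf_of_empty, top_add, ENNReal.mul_top hc0, ENNReal.top_mul hr0]; exact le_top
  rcases isEmpty_or_nonempty κ with hκ | hκ
  · haveI := hκ
    rw [show iInf g = ⊤ from iInf_of_empty g, add_top, ENNReal.mul_top hc0,
      ENNReal.top_mul hr0]
    exact le_top
  have hcr0 : c * r ≠ 0 := mul_ne_zero hc0 hr0
  have hcrt : c * r ≠ ⊤ := ENNReal.mul_ne_top hct hrt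
  have key : u / (c * r) ≤ iInf f + iInf g := by
    rw [ENNReal.iInf_add]
    refine le_iInf fun i => ?_
    rw [ENNReal.add_iInf]
    refine le_iInf fun j => ?_
    rw [ENNReal.div_le_iff_le_mul (Or.inl hcr0) (Or.inl hcrt)]
    calc u ≤ c * (f i + g j) * r := h i j
      _ = (f i + g j) * (c * r) := by ring
  have h2 := (ENNReal.div_le_iff_le_mul (Or.inl hcr0) (Or.inl hcrt)).mp key
  calc u ≤ (iInf f + iInf g) * (c * r) := h2
    _ = c * (iInf f + iInf g) * r := by ring

/-- From germ bounds to Hölder bounds, `0 < α < 1 < η < 2`. -/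
theorem holder_bound_of_germ_bounds
    (d : ℕ) (hd : 1 ≤ d) (s : Fin d → ℕ) (hs : ∀ i, 0 < s i)
    (α η : ℝ) (hα : 0 < α) (hα1 : α < 1) (hη1 : 1 < η) (hη2 : η < 2) :
    ∃ C > (0 : ℝ), ∀ D : Set (Fin d → ℝ),
      (∀ i : Fin d, s i = 1 → ∀ x ∈ D, ∀ y ∈ D,
        (y + adist s x y • (Pi.single i 1 : Fin d → ℝ)) ∈ D) →
      ∀ U : (Fin d → ℝ) → (Fin d → ℝ) → ℂ, IsGerm D U → ∀ R > (0 : ℝ),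
        (⨆ x : D, holderSemi s (D ∩ aball s x.1 R) α (U x.1)) ≤
    ENNReal.ofReal C * (germNorm s D η U + germHA s D η α U) *
            ENNReal.ofReal (R ^ (η - α)) := by
  refine ⟨12 * d + 9, by positivity, ?_⟩
  intro D hD U _hU R hR
  have hc0 : (ENNReal.ofReal (12 * d + 9)) ≠ 0 :=
    (ENNReal.ofReal_pos.mpr (by positivity)).ne'
  have hr0 : ENNReal.ofReal (R ^ (η - α)) ≠ 0 :=
    (ENNReal.ofReal_pos.mpr (Real.rpow_pos_of_pos hR _)).ne'
  simp only [germNorm, germHA]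
  refine le_mul_iInf_add_iInf_mul hc0 ENNReal.ofReal_ne_top hr0 ENNReal.ofReal_ne_top _ _ ?_
  rintro ⟨M₁, hM₁, h1⟩ ⟨M₂, hM₂, h2⟩
  refine iSup_le ?_
  rintro ⟨x, hx⟩
  simp only [holderSemi]
  refine iSup_le ?_
  rintro ⟨y, hyD, hyB⟩
  refine iSup_le ?_
  rintro ⟨z, hzD, hzB⟩
  refine iSup_le fun hne => ?_
  have hyB' : adist s x y < R := hyB
  have hzB' : adist s x z < R := hzB
  have hne' : y ≠ z := hne
  have hcore := core_bound s hs hα hα1 hη1 hη2 hD hM₁ h1 hM₂ h2 hR hx hyD hzD hyB' hzB' hne'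
  rw [← ENNReal.ofReal_add hM₁.le hM₂.le,
    ← ENNReal.ofReal_mul (by positivity : (0:ℝ) ≤ 12 * d + 9),
    ← ENNReal.ofReal_mul (mul_nonneg (by positivity) (by linarith))]
  apply ENNReal.ofReal_le_ofReal
  rw [div_le_iff₀ (Real.rpow_pos_of_pos (adist_pos' s hne') α)]
  exact hcore

end GermSchauder
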